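/- Let μ and ν be finite positive Borel measures on ℝ^d satisfying Assumption 1. For every fixed n ∈ ℕ, the feasible set of the level-n semidefinite relaxation is nonempty and compact, and the infimum ρ_n is attained: there exists a feasible pair (φ^{(n)}, ψ^{(n)}) of degree-2n pseudo-moment vectors with φ^{(n)}(1) + ψ^{(n)}(1) = ρ_n. -/

import Mathlib

open MeasureTheory Finset Filter

noncomputable section

/-- The monomial `x ↦ x^α`. -/
def mono (d : ℕ) (α : Fin d → ℕ) (x : Fin d → ℝ) : ℝ := ∏ i, x i ^ α i

/-- All moments of `μ` are finite. -/
def HasAllMoments {d : ℕ} (μ : Measure (Fin d → ℝ)) : Prop :=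
  ∀ α : Fin d → ℕ, Integrable (mono d α) μ

/-- The moment `μ_α = ∫ x^α dμ`. -/
def mMom {d : ℕ} (μ : Measure (Fin d → ℝ)) (α : Fin d → ℕ) : ℝ := ∫ x, mono d α x ∂μ

instance fintypeIdx (d n : ℕ) : Fintype {α : Fin d → ℕ // ∑ i, α i ≤ n} :=
  Fintype.ofInjective
    (fun a => (fun i => (⟨a.1 i,
        Nat.lt_succ_of_le (le_trans
          (Finset.single_le_sum (fun j _ => Nat.zero_le (a.1 j)) (Finset.mem_univ i)) a.2)⟩ :
        Fin (n+1))) : _ → (Fin d → Fin (n+1)))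
    (fun a b h => by
      apply Subtype.ext
      funext i
      exact congrArg Fin.val (congrFun h i))

/-- Moment matrix of order `n` built from a moment function `m`. -/
def momMat (d n : ℕ) (m : (Fin d → ℕ) → ℝ) :
    Matrix {α : Fin d → ℕ // ∑ i, α i ≤ n} {α : Fin d → ℕ // ∑ i, α i ≤ n} ℝ :=
  fun a b => m (a.1 + b.1)

/-- Carleman's condition. -/
def Carleman {d : ℕ} (μ : Measure (Fin d → ℝ)) : Prop :=
  ∀ i : Fin d, ¬ Summable (fun j : ℕ =>
    (∫ x, x i ^ (2 * (j + 1)) ∂μ) ^ (-(1 : ℝ) / (2 * (j + 1) : ℝ)))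

/-- Positive part of the Hahn–Jordan decomposition of `μ - ν`. -/
def hjPos {d : ℕ} (μ ν : Measure (Fin d → ℝ)) [IsFiniteMeasure μ] [IsFiniteMeasure ν] :
    Measure (Fin d → ℝ) :=
  (μ.toSignedMeasure - ν.toSignedMeasure).toJordanDecomposition.posPart

/-- Negative part of the Hahn–Jordan decomposition of `μ - ν`. -/
def hjNeg {d : ℕ} (μ ν : Measure (Fin d → ℝ)) [IsFiniteMeasure μ] [IsFiniteMeasure ν] :
    Measure (Fin d → ℝ) :=
  (μ.toSignedMeasure - ν.toSignedMeasure).toJordanDecomposition.negPart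

/-- Total variation distance `‖μ - ν‖_TV` (as a real number). -/
def tvReal {d : ℕ} (μ ν : Measure (Fin d → ℝ)) [IsFiniteMeasure μ] [IsFiniteMeasure ν] : ℝ :=
  (hjPos μ ν Set.univ + hjNeg μ ν Set.univ).toReal

/-- Degree-`2n` pseudo-moment vectors. -/
abbrev PV (d n : ℕ) := {α : Fin d → ℕ // ∑ i, α i ≤ 2 * n} → ℝ

/-- Moment matrix of a degree-`2n` pseudo-moment vector. -/
def pvMat (d n : ℕ) (φ : PV d n) :
    Matrix {α : Fin d → ℕ // ∑ i, α i ≤ n} {α : Fin d → ℕ // ∑ i, α i ≤ n} ℝ :=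
  fun a b => φ ⟨a.1 + b.1, by
    have h : ∑ i, (a.1 + b.1) i = (∑ i, a.1 i) + ∑ i, b.1 i := by
      simp [Finset.sum_add_distrib]
    have ha := a.2
    have hb := b.2
    omega⟩

/-- The index `α = 0`. -/
def zeroIdx (d n : ℕ) : {α : Fin d → ℕ // ∑ i, α i ≤ 2 * n} := ⟨0, by simp⟩

/-- Feasibility for the level-`n` semidefinite relaxation. -/
def Feas (d n : ℕ) (μ ν : Measure (Fin d → ℝ)) (φ ψ : PV d n) : Prop :=
  (∀ α, φ α - ψ α = mMom μ α.1 - mMom ν α.1) ∧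
  (pvMat d n φ).PosSemidef ∧ (momMat d n (mMom μ) - pvMat d n φ).PosSemidef ∧
  (pvMat d n ψ).PosSemidef ∧ (momMat d n (mMom ν) - pvMat d n ψ).PosSemidef

/-- Values of the level-`n` semidefinite relaxation. -/
def primalSet (d n : ℕ) (μ ν : Measure (Fin d → ℝ)) : Set ℝ :=
  {r | ∃ φ ψ : PV d n, Feas d n μ ν φ ψ ∧ r = φ (zeroIdx d n) + ψ (zeroIdx d n)}

/-- The optimal value `ρ_n` of the level-`n` semidefinite relaxation. -/
def rho (d n : ℕ) (μ ν : Measure (Fin d → ℝ)) : ℝ := sInf (primalSet d n μ ν)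


/-- Assumption 1: all moments of `μ` and `ν` are finite, and there is `c > 0` with
`∫ exp(c|x_i|) dμ < ∞` and `∫ exp(c|x_i|) dν < ∞` for every coordinate `i`. -/
def Assumption1 {d : ℕ} (μ ν : Measure (Fin d → ℝ)) : Prop :=
  HasAllMoments μ ∧ HasAllMoments ν ∧
  ∃ c : ℝ, 0 < c ∧ (∀ i : Fin d, Integrable (fun x => Real.exp (c * |x i|)) μ) ∧
    (∀ i : Fin d, Integrable (fun x => Real.exp (c * |x i|)) ν)


/-! ### Auxiliary lemmas -/

lemma psd_diag {m : Type*} [Fintype m] [DecidableEq m] {A : Matrix m m ℝ}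
    (h : A.PosSemidef) (a : m) : 0 ≤ A a a := by
  have := h.dotProduct_mulVec_nonneg (Pi.single a 1)
  simpa [dotProduct, Matrix.mulVec, Pi.single_apply] using this

lemma psd_entry {m : Type*} [Fintype m] [DecidableEq m] {A : Matrix m m ℝ}
    (h : A.PosSemidef) (a b : m) : |A a b| ≤ (A a a + A b b) / 2 := by
  rcases eq_or_ne a b with rfl | hab
  · have := psd_diag h a
    rw [abs_of_nonneg this]; linarith
  · have hsym : A b a = A a b := by
      have := congrFun (congrFun h.1 a) b
      simpa [Matrix.conjTranspose_apply] using this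
    have h1 := h.dotProduct_mulVec_nonneg (Pi.single a 1 + Pi.single b 1)
    have h2 := h.dotProduct_mulVec_nonneg (Pi.single a 1 - Pi.single b 1)
    simp [dotProduct, Matrix.mulVec, Pi.single_apply, Finset.sum_add_distrib,
      mul_add, add_mul, sub_mul, mul_sub, Finset.sum_ite_eq', hab, hab.symm,
      Finset.sum_sub_distrib] at h1 h2
    rw [abs_le]
    constructor <;> nlinarith [h1, h2, hsym]

lemma mono_add {d : ℕ} (α β : Fin d → ℕ) (x : Fin d → ℝ) :
    mono d (α + β) x = mono d α x * mono d β x := by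
  simp [mono, pow_add, Finset.prod_mul_distrib]

lemma momMat_psd (d n : ℕ) (μ : Measure (Fin d → ℝ)) (hμ : HasAllMoments μ) :
    (momMat d n (mMom μ)).PosSemidef := by
  refine Matrix.PosSemidef.of_dotProduct_mulVec_nonneg ?_ ?_
  · ext a b
    simp [momMat, Matrix.conjTranspose_apply, add_comm]
  · intro x
    have hint : ∀ (a b : {α : Fin d → ℕ // ∑ i, α i ≤ n}),
        Integrable (fun y => x a * x b * mono d (a.1 + b.1) y) μ :=
      fun a b => (hμ _).const_mul _
    have key : dotProduct (star x) ((momMat d n (mMom μ)).mulVec x)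
        = ∫ y, (∑ a : {α : Fin d → ℕ // ∑ i, α i ≤ n}, x a * mono d a.1 y)^2 ∂μ := by
      have h1 : ∀ y, (∑ a : {α : Fin d → ℕ // ∑ i, α i ≤ n}, x a * mono d a.1 y)^2
          = ∑ a : {α : Fin d → ℕ // ∑ i, α i ≤ n},
            ∑ b : {α : Fin d → ℕ // ∑ i, α i ≤ n}, x a * x b * mono d (a.1 + b.1) y := by
        intro y
        rw [sq, Finset.sum_mul_sum]
        refine Finset.sum_congr rfl fun a _ => Finset.sum_congr rfl fun b _ => ?_
        rw [mono_add]; ring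
      simp only [h1]
      rw [integral_finset_sum _ (fun a _ => integrable_finset_sum _ fun b _ => hint a b)]
      simp only [fun a => integral_finset_sum Finset.univ (fun b (_ : b ∈ Finset.univ) => hint a b)]
      simp only [MeasureTheory.integral_const_mul]
      simp [dotProduct, Matrix.mulVec, momMat, mMom, Finset.mul_sum]
      congr 1; ext a; congr 1; ext b; ring
    rw [key]
    exact integral_nonneg fun y => sq_nonneg _

lemma exists_le_sum_eq {d : ℕ} (γ : Fin d → ℕ) (m : ℕ) (hm : m ≤ ∑ i, γ i) :
    ∃ a : Fin d → ℕ, (∀ i, a i ≤ γ i) ∧ ∑ i, a i = m := by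
  induction m with
  | zero => exact ⟨0, fun i => Nat.zero_le _, by simp⟩
  | succ m ih =>
    obtain ⟨a, ha, hs⟩ := ih (Nat.le_of_succ_le hm)
    have hlt : ∃ i, a i < γ i := by
      by_contra h
      push_neg at h
      have : ∑ i, γ i ≤ ∑ i, a i := Finset.sum_le_sum fun i _ => h i
      omega
    obtain ⟨i, hi⟩ := hlt
    refine ⟨Function.update a i (a i + 1), fun j => ?_, ?_⟩
    · rcases eq_or_ne j i with rfl | hj
      · simp; omega
      · simp [Function.update_of_ne hj]; exact ha j
    · rw [Finset.sum_update_of_mem (Finset.mem_univ i), ← Finset.erase_eq]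
      have := Finset.add_sum_erase Finset.univ a (Finset.mem_univ i)
      omega

lemma exists_split {d n : ℕ} (γ : Fin d → ℕ) (h : ∑ i, γ i ≤ 2 * n) :
    ∃ a b : Fin d → ℕ, a + b = γ ∧ ∑ i, a i ≤ n ∧ ∑ i, b i ≤ n := by
  by_cases hn : ∑ i, γ i ≤ n
  · exact ⟨γ, 0, by simp, hn, by simp⟩
  · push_neg at hn
    obtain ⟨a, ha, hs⟩ := exists_le_sum_eq γ (∑ i, γ i - n) (by omega)
    refine ⟨a, fun i => γ i - a i, ?_, by omega, ?_⟩
    · funext i; have := ha i; simp; omega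
    · show ∑ i, (γ i - a i) ≤ n
      have : ∑ i, a i + ∑ i, (γ i - a i) = ∑ i, γ i := by
        rw [← Finset.sum_add_distrib]
        exact Finset.sum_congr rfl fun i _ => by have := ha i; omega
      omega

lemma pvMat_herm (d n : ℕ) (φ : PV d n) : (pvMat d n φ).IsHermitian := by
  ext a b
  simp only [Matrix.conjTranspose_apply, pvMat, star_trivial]
  exact congrArg φ (Subtype.ext (add_comm _ _))

lemma momMat_herm (d n : ℕ) (m : (Fin d → ℕ) → ℝ) : (momMat d n m).IsHermitian := by
  ext a b
  simp [momMat, Matrix.conjTranspose_apply, add_comm]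

lemma closed_psd {ι X : Type*} [Fintype ι] [TopologicalSpace X]
    (f : X → Matrix ι ι ℝ) (hf : Continuous f) (hherm : ∀ p, (f p).IsHermitian) :
    IsClosed {p | (f p).PosSemidef} := by
  have heq : {p | (f p).PosSemidef}
      = ⋂ x : ι → ℝ, {p | 0 ≤ dotProduct (star x) ((f p).mulVec x)} := by
    ext p
    simp only [Set.mem_iInter, Set.mem_setOf_eq]
    exact ⟨fun h x => h.dotProduct_mulVec_nonneg x, fun h => .of_dotProduct_mulVec_nonneg (hherm p) h⟩
  rw [heq]
  exact isClosed_iInter fun x => isClosed_le continuous_const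
    (Continuous.dotProduct continuous_const (hf.matrix_mulVec continuous_const))

lemma cont_pvMat_fst (d n : ℕ) : Continuous (fun p : PV d n × PV d n => pvMat d n p.1) :=
  continuous_pi fun a => continuous_pi fun b => (continuous_apply _).comp continuous_fst

lemma cont_pvMat_snd (d n : ℕ) : Continuous (fun p : PV d n × PV d n => pvMat d n p.2) :=
  continuous_pi fun a => continuous_pi fun b => (continuous_apply _).comp continuous_snd

/-- Under Assumption 1, for each `n` the feasible set of the level-`n`
semidefinite relaxation is nonempty and compact, and the infimum `ρ_n` is attained. -/
theorem relaxation_feasible_compact_attained (d n : ℕ) (μ ν : Measure (Fin d → ℝ))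
    [IsFiniteMeasure μ] [IsFiniteMeasure ν] (hA : Assumption1 μ ν) :
    {p : PV d n × PV d n | Feas d n μ ν p.1 p.2}.Nonempty ∧
    IsCompact {p : PV d n × PV d n | Feas d n μ ν p.1 p.2} ∧
    ∃ φ ψ : PV d n, Feas d n μ ν φ ψ ∧
      φ (zeroIdx d n) + ψ (zeroIdx d n) = rho d n μ ν := by
  obtain ⟨hμ, hν, -⟩ := hA
  classical
  -- the canonical feasible point
  set φ0 : PV d n := fun γ => mMom μ γ.1 with hφ0
  set ψ0 : PV d n := fun γ => mMom ν γ.1 with hψ0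
  have hpv0μ : pvMat d n φ0 = momMat d n (mMom μ) := rfl
  have hpv0ν : pvMat d n ψ0 = momMat d n (mMom ν) := rfl
  have hfeas0 : Feas d n μ ν φ0 ψ0 := by
    refine ⟨fun α => rfl, ?_, ?_, ?_, ?_⟩
    · rw [hpv0μ]; exact momMat_psd d n μ hμ
    · rw [hpv0μ, sub_self]; exact Matrix.PosSemidef.zero
    · rw [hpv0ν]; exact momMat_psd d n ν hν
    · rw [hpv0ν, sub_self]; exact Matrix.PosSemidef.zero
  have hne : {p : PV d n × PV d n | Feas d n μ ν p.1 p.2}.Nonempty := ⟨(φ0, ψ0), hfeas0⟩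
  -- closedness
  have hclosed : IsClosed {p : PV d n × PV d n | Feas d n μ ν p.1 p.2} := by
    have hdecomp : {p : PV d n × PV d n | Feas d n μ ν p.1 p.2}
        = (⋂ α, {p : PV d n × PV d n | p.1 α - p.2 α = mMom μ α.1 - mMom ν α.1})
          ∩ ({p : PV d n × PV d n | (pvMat d n p.1).PosSemidef}
          ∩ ({p : PV d n × PV d n | (momMat d n (mMom μ) - pvMat d n p.1).PosSemidef}
          ∩ ({p : PV d n × PV d n | (pvMat d n p.2).PosSemidef}
          ∩ {p : PV d n × PV d n | (momMat d n (mMom ν) - pvMat d n p.2).PosSemidef}))) := by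
      ext p
      simp only [Set.mem_inter_iff, Set.mem_iInter, Set.mem_setOf_eq, Feas]
    rw [hdecomp]
    refine IsClosed.inter (isClosed_iInter fun α => isClosed_eq
        (Continuous.sub ((continuous_apply α).comp continuous_fst)
          ((continuous_apply α).comp continuous_snd)) continuous_const)
      (IsClosed.inter (closed_psd _ (cont_pvMat_fst d n) (fun p => pvMat_herm d n p.1))
      (IsClosed.inter (closed_psd _ (continuous_const.sub (cont_pvMat_fst d n))
          (fun p => (momMat_herm d n (mMom μ)).sub (pvMat_herm d n p.1)))
      (IsClosed.inter (closed_psd _ (cont_pvMat_snd d n) (fun p => pvMat_herm d n p.2))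
        (closed_psd _ (continuous_const.sub (cont_pvMat_snd d n))
          (fun p => (momMat_herm d n (mMom ν)).sub (pvMat_herm d n p.2))))))
  -- boundedness and compactness
  have hsplit : ∀ γ : {α : Fin d → ℕ // ∑ i, α i ≤ 2 * n},
      ∃ a b : {α : Fin d → ℕ // ∑ i, α i ≤ n}, a.1 + b.1 = γ.1 := by
    intro γ
    obtain ⟨a, b, hab, ha, hb⟩ := exists_split γ.1 γ.2
    exact ⟨⟨a, ha⟩, ⟨b, hb⟩, hab⟩
  choose f g hfg using hsplit
  set B1 := momMat d n (mMom μ) with hB1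
  set B2 := momMat d n (mMom ν) with hB2
  set C1 : {α : Fin d → ℕ // ∑ i, α i ≤ 2 * n} → ℝ :=
    fun γ => (B1 (f γ) (f γ) + B1 (g γ) (g γ)) / 2 with hC1
  set C2 : {α : Fin d → ℕ // ∑ i, α i ≤ 2 * n} → ℝ :=
    fun γ => (B2 (f γ) (f γ) + B2 (g γ) (g γ)) / 2 with hC2
  have hbound : ∀ (φ : PV d n) (B : Matrix _ _ ℝ), (pvMat d n φ).PosSemidef →
      (B - pvMat d n φ).PosSemidef →
      ∀ γ, |φ γ| ≤ (B (f γ) (f γ) + B (g γ) (g γ)) / 2 := by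
    intro φ B h1 h2 γ
    have hentry : pvMat d n φ (f γ) (g γ) = φ γ := congrArg φ (Subtype.ext (hfg γ))
    have he := psd_entry h1 (f γ) (g γ)
    have hd1 : pvMat d n φ (f γ) (f γ) ≤ B (f γ) (f γ) := by
      have := psd_diag h2 (f γ)
      simp only [Matrix.sub_apply] at this
      linarith
    have hd2 : pvMat d n φ (g γ) (g γ) ≤ B (g γ) (g γ) := by
      have := psd_diag h2 (g γ)
      simp only [Matrix.sub_apply] at this
      linarith
    rw [hentry] at he
    linarith
  have hsub : {p : PV d n × PV d n | Feas d n μ ν p.1 p.2}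
      ⊆ (Set.univ.pi fun γ => Set.Icc (-(C1 γ)) (C1 γ)) ×ˢ
        (Set.univ.pi fun γ => Set.Icc (-(C2 γ)) (C2 γ)) := by
    rintro p ⟨-, h1, h2, h3, h4⟩
    constructor
    · intro γ _
      exact abs_le.mp (hbound p.1 B1 h1 h2 γ)
    · intro γ _
      exact abs_le.mp (hbound p.2 B2 h3 h4 γ)
  have hcomp : IsCompact {p : PV d n × PV d n | Feas d n μ ν p.1 p.2} :=
    IsCompact.of_isClosed_subset
      ((isCompact_univ_pi fun γ => isCompact_Icc).prod
        (isCompact_univ_pi fun γ => isCompact_Icc)) hclosed hsub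
  refine ⟨hne, hcomp, ?_⟩
  -- attainment
  have himg : primalSet d n μ ν
      = (fun p : PV d n × PV d n => p.1 (zeroIdx d n) + p.2 (zeroIdx d n)) ''
        {p : PV d n × PV d n | Feas d n μ ν p.1 p.2} := by
    ext r
    constructor
    · rintro ⟨φ, ψ, hf, rfl⟩
      exact ⟨(φ, ψ), hf, rfl⟩
    · rintro ⟨p, hp, rfl⟩
      exact ⟨p.1, p.2, hp, rfl⟩
  have hcont : Continuous (fun p : PV d n × PV d n =>
      p.1 (zeroIdx d n) + p.2 (zeroIdx d n)) :=
    Continuous.add ((continuous_apply _).comp continuous_fst)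
      ((continuous_apply _).comp continuous_snd)
  have hcompI : IsCompact (primalSet d n μ ν) := by
    rw [himg]; exact hcomp.image hcont
  have hneI : (primalSet d n μ ν).Nonempty := by
    rw [himg]; exact hne.image _
  have hmem : rho d n μ ν ∈ primalSet d n μ ν := hcompI.sInf_mem hneI
  obtain ⟨φ, ψ, hf, hr⟩ := hmem
  exact ⟨φ, ψ, hf, hr.symm⟩

end
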